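/- Let λ, β, μ, μ', α > 0 and ρ ∈ [0,1], and suppose μ(μ+μ'+α)³ ≠ αβλ²ρ. Define γ as a function of R by γ(R) := β/(R(μ+μ'+α)) − μ/λ, and define Φ(R, I) := a(R)·I³ + b(R)·I² + c(R)·I + d(R), where a(R), b(R), c(R), d(R) are the endemic-equilibrium cubic coefficients with γ replaced by γ(R) and R₀ replaced by R. Then ∂Φ/∂I at (R,I) = (1,0) is nonzero, and −(∂Φ/∂R)/(∂Φ/∂I) evaluated at (1,0) equals βλ²(μ+μ'+α)/(μ(μ+μ'+α)³ − αβλ²ρ). In particular this implicit derivative ∂I/∂R₀ at (R₀, I) = (1,0) is positive (forward bifurcation) when β < μ(μ+μ'+α)³/(αλ²ρ) and negative (backward bifurcation) when β > μ(μ+μ'+α)³/(αλ²ρ). -/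

import Mathlib

/-- Direction of the transcritical bifurcation at `R₀ = 1`: with `γ` eliminated via
`γ(R) = β/(R(μ+μ'+α)) − μ/λ` and `Φ(R,I)` the endemic-equilibrium cubic, the implicit
derivative `∂I/∂R₀ = −(∂Φ/∂R)/(∂Φ/∂I)` at `(R,I) = (1,0)` equals
`βλ²(μ+μ'+α)/(μ(μ+μ'+α)³ − αβλ²ρ)`; it is positive (forward bifurcation) when
`αβλ²ρ < μ(μ+μ'+α)³`, i.e. `β < μ(μ+μ'+α)³/(αλ²ρ)`, and negative (backward bifurcation)
when `αβλ²ρ > μ(μ+μ'+α)³`, i.e. `β > μ(μ+μ'+α)³/(αλ²ρ)`. -/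
theorem forward_backward_bifurcation
    (lam β μ μ' α ρ : ℝ)
    (hlam : 0 < lam) (hβ : 0 < β) (hμ : 0 < μ) (hμ' : 0 < μ') (hα : 0 < α)
    (hρ : ρ ∈ Set.Icc (0:ℝ) 1)
    (hne : μ * (μ + μ' + α) ^ 3 ≠ α * β * lam ^ 2 * ρ) :
    let γ : ℝ → ℝ := fun R => β / (R * (μ + μ' + α)) - μ / lam
    let a : ℝ → ℝ := fun R => ρ ^ 2 * (μ + μ') * ((μ + μ') * γ R - β)
    let b : ℝ → ℝ := fun R =>
      ρ ^ 2 * (μ + γ R * lam) * ((μ + μ' + α) * (R - 1) + α) + ρ * α * β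
        + 2 * ρ * (μ + μ' + α) * ((μ + μ') * γ R - β)
    let c : ℝ → ℝ := fun R =>
      2 * ρ * (μ + γ R * lam) * (μ + μ' + α) * (R - 1)
        + (μ + μ' + α) * ((μ + μ') * γ R - β) + γ R * α * (μ + μ' + α)
        + ρ * α * (μ + γ R * lam)
    let d : ℝ → ℝ := fun R => (μ + γ R * lam) * (μ + μ' + α) * (R - 1)
    let Φ : ℝ → ℝ → ℝ := fun R I => a R * I ^ 3 + b R * I ^ 2 + c R * I + d R
    deriv (fun I => Φ 1 I) 0 ≠ 0 ∧
    -(deriv (fun R => Φ R 0) 1) / deriv (fun I => Φ 1 I) 0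
      = β * lam ^ 2 * (μ + μ' + α) / (μ * (μ + μ' + α) ^ 3 - α * β * lam ^ 2 * ρ) ∧
    (α * β * lam ^ 2 * ρ < μ * (μ + μ' + α) ^ 3 →
      0 < -(deriv (fun R => Φ R 0) 1) / deriv (fun I => Φ 1 I) 0) ∧
    (μ * (μ + μ' + α) ^ 3 < α * β * lam ^ 2 * ρ →
      -(deriv (fun R => Φ R 0) 1) / deriv (fun I => Φ 1 I) 0 < 0) := by

  obtain ⟨hρ0, hρ1⟩ := hρ
  intro γ a b c d Φ
  have hKpos : 0 < μ + μ' + α := by positivity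
  have hKne : μ + μ' + α ≠ 0 := hKpos.ne'
  -- derivative in I at (1,0)
  have hI : deriv (fun I => Φ 1 I) 0 = c 1 := by
    have h : HasDerivAt (fun I : ℝ => a 1 * I ^ 3 + b 1 * I ^ 2 + c 1 * I + d 1) (c 1) 0 := by
      have h3 : HasDerivAt (fun I : ℝ => a 1 * I ^ 3) (a 1 * (3 * 0 ^ 2)) 0 :=
        (hasDerivAt_pow 3 (0:ℝ)).const_mul (a 1)
      have h2 : HasDerivAt (fun I : ℝ => b 1 * I ^ 2) (b 1 * (2 * 0 ^ 1)) 0 :=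
        (hasDerivAt_pow 2 (0:ℝ)).const_mul (b 1)
      have h1 : HasDerivAt (fun I : ℝ => c 1 * I) (c 1 * 1) 0 :=
        (hasDerivAt_id (0:ℝ)).const_mul (c 1)
      have := ((h3.add h2).add h1).add_const (d 1)
      exact this.congr_deriv (by ring)
    exact h.deriv
  have hc : c 1 = (α * β * lam ^ 2 * ρ - μ * (μ + μ' + α) ^ 3) / (lam * (μ + μ' + α)) := by
    simp only [c, γ]
    field_simp
    ring
  have hsub1 : α * β * lam ^ 2 * ρ - μ * (μ + μ' + α) ^ 3 ≠ 0 := by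
    intro h
    exact hne (by linarith [sub_eq_zero.mp h])
  have hsub2 : μ * (μ + μ' + α) ^ 3 - α * β * lam ^ 2 * ρ ≠ 0 :=
    sub_ne_zero.mpr hne
  have hcne : c 1 ≠ 0 := by
    rw [hc]
    exact div_ne_zero hsub1 (by positivity)
  -- derivative in R at (1,0)
  have hR : deriv (fun R => Φ R 0) 1 = β * lam := by
    have heq : (fun R => Φ R 0) = d := by
      funext R
      simp [Φ]
    rw [heq]
    have hγ : HasDerivAt γ (-(β / (μ + μ' + α))) 1 := by
      have hden : HasDerivAt (fun R : ℝ => R * (μ + μ' + α)) (μ + μ' + α) 1 := by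
        simpa using (hasDerivAt_id (1:ℝ)).mul_const (μ + μ' + α)
      have hdiv : HasDerivAt (fun R : ℝ => β / (R * (μ + μ' + α)))
          ((0 * (1 * (μ + μ' + α)) - β * (μ + μ' + α)) / (1 * (μ + μ' + α)) ^ 2) 1 :=
        (hasDerivAt_const (1:ℝ) β).div hden (by simpa using hKne)
      have := hdiv.sub_const (μ / lam)
      exact this.congr_deriv (by field_simp; ring)
    have hf : HasDerivAt (fun R => (μ + γ R * lam) * (μ + μ' + α))
        ((-(β / (μ + μ' + α))) * lam * (μ + μ' + α)) 1 :=
      ((hγ.mul_const lam).const_add μ).mul_const (μ + μ' + α)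
    have hg : HasDerivAt (fun R : ℝ => R - 1) 1 1 := by
      simpa using (hasDerivAt_id (1:ℝ)).sub_const 1
    have hd : HasDerivAt d
        ((-(β / (μ + μ' + α))) * lam * (μ + μ' + α) * (1 - 1)
          + (μ + γ 1 * lam) * (μ + μ' + α) * 1) 1 := hf.mul hg
    rw [hd.deriv]
    simp only [γ]
    field_simp
    ring
  rw [hI, hR, hc]
  have hmain : -(β * lam) / ((α * β * lam ^ 2 * ρ - μ * (μ + μ' + α) ^ 3) / (lam * (μ + μ' + α)))
      = β * lam ^ 2 * (μ + μ' + α) / (μ * (μ + μ' + α) ^ 3 - α * β * lam ^ 2 * ρ) := by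
    rw [div_div_eq_mul_div]
    rw [div_eq_div_iff hsub1 hsub2]
    ring
  refine ⟨div_ne_zero hsub1 (by positivity), hmain, ?_, ?_⟩
  · intro hlt
    rw [hmain]
    exact div_pos (by positivity) (by linarith)
  · intro hlt
    rw [hmain]
    exact div_neg_of_pos_of_neg (by positivity) (by linarith)
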